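/- For N ≥ 1 and vectors a_1,…,a_N ∈ ℝ^n, the sum ∑_{k=1}^N √(1+|a_k|²) minus √(1+|∑_{k=1}^N a_k|²) is at least (N−1)/(∑_{k=1}^N √(1+|a_k|²) + √(1+|∑_{k=1}^N a_k|²)). -/

import Mathlib

open Finset

lemma key_ineq {n : ℕ} (x y : EuclideanSpace ℝ (Fin n)) :
    1 + inner ℝ x y ≤ Real.sqrt (1 + ‖x‖ ^ 2) * Real.sqrt (1 + ‖y‖ ^ 2) := by
  rw [← Real.sqrt_mul (by positivity)]
  have hcs : |inner ℝ x y| ≤ ‖x‖ * ‖y‖ := abs_real_inner_le_norm x y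
  have h1 : 1 + (inner ℝ x y : ℝ) ≤ Real.sqrt ((1 + inner ℝ x y) ^ 2) := by
    rw [Real.sqrt_sq_eq_abs]; exact le_abs_self _
  refine h1.trans (Real.sqrt_le_sqrt ?_)
  rw [abs_le] at hcs
  nlinarith [sq_nonneg (‖x‖ - ‖y‖), sq_nonneg (‖x‖ * ‖y‖ - inner ℝ x y),
    sq_nonneg (‖x‖ * ‖y‖ + inner ℝ x y)]

theorem double_bubble_elem_ineq_1 (n N : ℕ) (hN : 1 ≤ N)
    (a : Fin N → EuclideanSpace ℝ (Fin n)) :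
    ((N : ℝ) - 1) /
        ((∑ k, Real.sqrt (1 + ‖a k‖ ^ 2)) + Real.sqrt (1 + ‖∑ k, a k‖ ^ 2)) ≤
      (∑ k, Real.sqrt (1 + ‖a k‖ ^ 2)) - Real.sqrt (1 + ‖∑ k, a k‖ ^ 2) := by
  set S := ∑ k, Real.sqrt (1 + ‖a k‖ ^ 2) with hS
  set T := Real.sqrt (1 + ‖∑ k, a k‖ ^ 2) with hT
  have hT1 : 1 ≤ T :=
    Real.one_le_sqrt.mpr (by nlinarith [sq_nonneg ‖∑ k, a k‖])
  have hS1 : (N : ℝ) ≤ S := by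
    calc (N : ℝ) = ∑ _k : Fin N, 1 := by simp
    _ ≤ S := Finset.sum_le_sum fun k _ =>
        Real.one_le_sqrt.mpr (by nlinarith [sq_nonneg ‖a k‖])
  have hpos : 0 < S + T := by
    have : (1:ℝ) ≤ N := by exact_mod_cast hN
    linarith
  rw [div_le_iff₀ hpos]
  have hT2 : T ^ 2 = 1 + ‖∑ k, a k‖ ^ 2 := Real.sq_sqrt (by positivity)
  have hS2 : (N : ℝ) ^ 2 + ‖∑ k, a k‖ ^ 2 ≤ S ^ 2 := by
    have expand : S ^ 2 = ∑ h : Fin N, ∑ k : Fin N,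
        Real.sqrt (1 + ‖a h‖ ^ 2) * Real.sqrt (1 + ‖a k‖ ^ 2) := by
      rw [sq, hS, Finset.sum_mul_sum]
    have lower : ∑ h : Fin N, ∑ k : Fin N, (1 + (inner ℝ (a h) (a k) : ℝ)) ≤
        ∑ h : Fin N, ∑ k : Fin N,
        Real.sqrt (1 + ‖a h‖ ^ 2) * Real.sqrt (1 + ‖a k‖ ^ 2) :=
      Finset.sum_le_sum fun h _ => Finset.sum_le_sum fun k _ => key_ineq (a h) (a k)
    have eq1 : ∑ h : Fin N, ∑ k : Fin N, (1 + (inner ℝ (a h) (a k) : ℝ)) =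
        (N : ℝ) ^ 2 + ‖∑ k, a k‖ ^ 2 := by
      simp only [Finset.sum_add_distrib, Finset.sum_const, Finset.card_univ,
        Fintype.card_fin, nsmul_eq_mul, mul_one]
      rw [← Finset.sum_comm]
      have : ∑ k : Fin N, ∑ h : Fin N, (inner ℝ (a h) (a k) : ℝ) = ‖∑ k, a k‖ ^ 2 := by
        rw [← real_inner_self_eq_norm_sq]
        rw [sum_inner]
        refine Finset.sum_congr rfl fun k _ => ?_
        rw [inner_sum]
        exact Finset.sum_congr rfl fun h _ => real_inner_comm _ _
      rw [this]; ring
    rw [expand, ← eq1]; exact lower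
  have hN1 : (1:ℝ) ≤ N := by exact_mod_cast hN
  nlinarith [sq_nonneg ((N:ℝ) - 1)]
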